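/- arXiv:1506.05408 — 3 statements merged into one kernel-verified Lean document; each statement's English description precedes it below -/
import Mathlib

section
/- The signature of the tensor product of two nondegenerate symmetric bilinear forms over the real numbers equals the product of their signatures: sign(B ⊗ B') = sign(B) · sign(B'). -/
open LinearMap (BilinForm)

/-- The positive index of inertia: the largest dimension of a subspace on which the form is
positive definite. -/
noncomputable def BilinForm.posIndex {V : Type*} [AddCommGroup V] [Module ℝ V]
    (B : BilinForm ℝ V) : ℕ :=
  sSup {n | ∃ W : Submodule ℝ V, Module.finrank ℝ W = n ∧ ∀ x ∈ W, x ≠ 0 → 0 < B x x}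

/-- The negative index of inertia: the largest dimension of a subspace on which the form is
negative definite. -/
noncomputable def BilinForm.negIndex {V : Type*} [AddCommGroup V] [Module ℝ V]
    (B : BilinForm ℝ V) : ℕ :=
  sSup {n | ∃ W : Submodule ℝ V, Module.finrank ℝ W = n ∧ ∀ x ∈ W, x ≠ 0 → B x x < 0}

/-- The signature of a real bilinear form: number of positive minus number of negative
eigenvalues (well-defined by Sylvester's law of inertia). -/
noncomputable def BilinForm.signature {V : Type*} [AddCommGroup V] [Module ℝ V]
    (B : BilinForm ℝ V) : ℤ :=
  (BilinForm.posIndex B : ℤ) - (BilinForm.negIndex B : ℤ)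



open Module Finset

section Aux

variable {V : Type*} [AddCommGroup V] [Module ℝ V] [FiniteDimensional ℝ V]
variable {ι : Type*} [Fintype ι] [DecidableEq ι]

lemma bilin_apply_self_eq_sum (B : BilinForm ℝ V) (b : Basis ι ℝ V)
    (horth : ∀ i j, i ≠ j → B (b i) (b j) = 0) (x : V) :
    B x x = ∑ i, b.repr x i * b.repr x i * B (b i) (b i) := by
  have step : B x x = ∑ j, ∑ i, b.repr x j * (b.repr x i * B (b i) (b j)) := by
    conv_lhs => rw [← b.sum_repr x]
    simp only [map_sum, map_smul, LinearMap.sum_apply, LinearMap.smul_apply, smul_eq_mul]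
    exact Finset.sum_congr rfl fun j _ => Finset.mul_sum _ _ _
  rw [step]
  refine Finset.sum_congr rfl fun j _ => ?_
  rw [Finset.sum_eq_single j (fun i _ hij => by rw [horth i j hij]; ring) (by simp)]
  ring

lemma span_finrank_eq (b : Basis ι ℝ V) (s : Finset ι) :
    finrank ℝ (Submodule.span ℝ (b '' ↑s)) = s.card := by
  classical
  have h1 : (b '' ↑s : Set V) = ↑(s.image b) := (Finset.coe_image).symm
  rw [h1, finrank_span_finset_eq_card, Finset.card_image_of_injective s b.injective]
  exact b.linearIndependent.linearIndepOn_id.mono (by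
    intro y hy
    obtain ⟨i, _, rfl⟩ := Finset.mem_image.mp (Finset.mem_coe.mp hy)
    exact Set.mem_range_self i)

end Aux

section Aux2
set_option linter.unusedSectionVars false
variable {V : Type*} [AddCommGroup V] [Module ℝ V] [FiniteDimensional ℝ V]
variable {ι : Type*} [Fintype ι] [DecidableEq ι]

lemma posdef_on_span (B : BilinForm ℝ V) (b : Basis ι ℝ V)
    (horth : ∀ i j, i ≠ j → B (b i) (b j) = 0) (s : Finset ι)
    (hs : ∀ i ∈ s, 0 < B (b i) (b i)) :
    ∀ x ∈ Submodule.span ℝ (b '' ↑s), x ≠ 0 → 0 < B x x := by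
  intro x hx hx0
  rw [bilin_apply_self_eq_sum B b horth x]
  have hsupp : ↑(b.repr x).support ⊆ (↑s : Set ι) := b.mem_span_image.mp hx
  have hrepr : b.repr x ≠ 0 := fun h => hx0 (by
    have := congrArg b.repr.symm h
    simpa using this)
  obtain ⟨i, hi⟩ := Finsupp.ne_iff.mp hrepr
  simp only [Finsupp.coe_zero, Pi.zero_apply] at hi
  refine Finset.sum_pos' (fun j _ => ?_) ⟨i, Finset.mem_univ i, ?_⟩
  · by_cases h : b.repr x j = 0
    · simp [h]
    · have hj : j ∈ s := hsupp (Finsupp.mem_support_iff.mpr h)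
      exact mul_nonneg (mul_self_nonneg _) (hs j hj).le
  · have hi' : i ∈ s := hsupp (Finsupp.mem_support_iff.mpr hi)
    exact mul_pos (mul_self_pos.mpr hi) (hs i hi')

lemma nonpos_on_span (B : BilinForm ℝ V) (b : Basis ι ℝ V)
    (horth : ∀ i j, i ≠ j → B (b i) (b j) = 0) (s : Finset ι)
    (hs : ∀ i ∈ s, B (b i) (b i) < 0) :
    ∀ x ∈ Submodule.span ℝ (b '' ↑s), B x x ≤ 0 := by
  intro x hx
  rw [bilin_apply_self_eq_sum B b horth x]
  have hsupp : ↑(b.repr x).support ⊆ (↑s : Set ι) := b.mem_span_image.mp hx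
  refine Finset.sum_nonpos fun j _ => ?_
  by_cases h : b.repr x j = 0
  · simp [h]
  · have hj : j ∈ s := hsupp (Finsupp.mem_support_iff.mpr h)
    exact mul_nonpos_of_nonneg_of_nonpos (mul_self_nonneg _) (hs j hj).le

lemma posIndex_eq_card (B : BilinForm ℝ V) (b : Basis ι ℝ V)
    (horth : ∀ i j, i ≠ j → B (b i) (b j) = 0)
    (hnz : ∀ i, B (b i) (b i) ≠ 0) :
    BilinForm.posIndex B = (Finset.univ.filter fun i => 0 < B (b i) (b i)).card := by
  set P : Finset ι := Finset.univ.filter fun i => 0 < B (b i) (b i) with hP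
  set N : Finset ι := Finset.univ.filter fun i => B (b i) (b i) < 0 with hN
  have hcard : P.card + N.card = Fintype.card ι := by
    rw [hP, hN]
    rw [show (Finset.univ.filter fun i => B (b i) (b i) < 0)
        = Finset.univ.filter fun i => ¬ 0 < B (b i) (b i) from
      Finset.filter_congr fun i _ => by
        constructor
        · exact fun h => not_lt.mpr h.le
        · exact fun h => lt_of_le_of_ne (not_lt.mp h) (hnz i)]
    rw [Finset.card_filter_add_card_filter_not]
    exact Finset.card_univ
  have hmem : P.card ∈ {n | ∃ W : Submodule ℝ V,
      Module.finrank ℝ W = n ∧ ∀ x ∈ W, x ≠ 0 → 0 < B x x} :=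
    ⟨Submodule.span ℝ (b '' ↑P), span_finrank_eq b P,
      posdef_on_span B b horth P (fun i hi => (Finset.mem_filter.mp hi).2)⟩
  have hub : ∀ n ∈ {n | ∃ W : Submodule ℝ V,
      Module.finrank ℝ W = n ∧ ∀ x ∈ W, x ≠ 0 → 0 < B x x}, n ≤ P.card := by
    rintro n ⟨W, rfl, hW⟩
    set Wneg := Submodule.span ℝ (b '' ↑N)
    have hdisj : W ⊓ Wneg = ⊥ := by
      rw [Submodule.eq_bot_iff]
      intro x hx
      by_contra hx0
      exact absurd (hW x (Submodule.mem_inf.mp hx).1 hx0).le (not_le.mpr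
        (lt_of_le_of_lt (le_refl _) (lt_of_le_of_lt (le_of_eq rfl) (lt_of_le_of_ne
          (nonpos_on_span B b horth N (fun i hi => (Finset.mem_filter.mp hi).2) x
            (Submodule.mem_inf.mp hx).2)
          (by
            have := hW x (Submodule.mem_inf.mp hx).1 hx0
            exact this.ne')))))
    have hsum := Submodule.finrank_sup_add_finrank_inf_eq W Wneg
    rw [hdisj] at hsum
    simp only [finrank_bot, add_zero] at hsum
    have hle : finrank ℝ W + finrank ℝ Wneg ≤ finrank ℝ V := by
      rw [← hsum]; exact Submodule.finrank_le _
    have hN' : finrank ℝ Wneg = N.card := span_finrank_eq b N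
    have hV : finrank ℝ V = Fintype.card ι := finrank_eq_card_basis b
    omega
  exact le_antisymm (csSup_le ⟨_, hmem⟩ hub) (le_csSup ⟨_, hub⟩ hmem)

end Aux2

section Aux3
set_option linter.unusedSectionVars false
variable {V : Type*} [AddCommGroup V] [Module ℝ V] [FiniteDimensional ℝ V]
variable {ι : Type*} [Fintype ι] [DecidableEq ι]

lemma negIndex_eq_posIndex_neg (B : BilinForm ℝ V) :
    BilinForm.negIndex B = BilinForm.posIndex (-B) := by
  unfold BilinForm.negIndex BilinForm.posIndex
  congr 1
  ext n
  simp [LinearMap.neg_apply, neg_pos]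

lemma negIndex_eq_card (B : BilinForm ℝ V) (b : Basis ι ℝ V)
    (horth : ∀ i j, i ≠ j → B (b i) (b j) = 0)
    (hnz : ∀ i, B (b i) (b i) ≠ 0) :
    BilinForm.negIndex B = (Finset.univ.filter fun i => B (b i) (b i) < 0).card := by
  rw [negIndex_eq_posIndex_neg,
    posIndex_eq_card (-B) b (fun i j h => by simp [LinearMap.neg_apply, horth i j h])
      (fun i => by simp [LinearMap.neg_apply, hnz i])]
  congr 1
  exact Finset.filter_congr fun i _ => by simp [LinearMap.neg_apply, neg_pos]

lemma signature_eq_sum (B : BilinForm ℝ V) (b : Basis ι ℝ V)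
    (horth : ∀ i j, i ≠ j → B (b i) (b j) = 0)
    (hnz : ∀ i, B (b i) (b i) ≠ 0) :
    BilinForm.signature B = ∑ i, (if 0 < B (b i) (b i) then (1 : ℤ) else -1) := by
  unfold BilinForm.signature
  rw [posIndex_eq_card B b horth hnz, negIndex_eq_card B b horth hnz]
  rw [Finset.sum_ite, Finset.sum_const, Finset.sum_const]
  have hfil : (Finset.univ.filter fun i => ¬ 0 < B (b i) (b i))
      = Finset.univ.filter fun i => B (b i) (b i) < 0 :=
    Finset.filter_congr fun i _ => by
      constructor
      · exact fun h => lt_of_le_of_ne (not_lt.mp h) (hnz i)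
      · exact fun h => not_lt.mpr h.le
  rw [hfil]
  ring

end Aux3


open TensorProduct in
/-- The signature of the tensor product of two nondegenerate symmetric bilinear forms over `ℝ`
equals the product of their signatures. -/
theorem signature_tmul {V V' : Type} [AddCommGroup V] [Module ℝ V]
    [AddCommGroup V'] [Module ℝ V'] [FiniteDimensional ℝ V] [FiniteDimensional ℝ V']
    (B : BilinForm ℝ V) (B' : BilinForm ℝ V')
    (hB : B.IsSymm) (hB' : B'.IsSymm) (hBnd : B.Nondegenerate) (hB'nd : B'.Nondegenerate) :
    BilinForm.signature (LinearMap.BilinForm.tmul B B') =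
      BilinForm.signature B * BilinForm.signature B' := by
  obtain ⟨v, hv⟩ := LinearMap.BilinForm.exists_orthogonal_basis (LinearMap.BilinForm.isSymm_iff.1 hB)
  obtain ⟨v', hv'⟩ := LinearMap.BilinForm.exists_orthogonal_basis (LinearMap.BilinForm.isSymm_iff.1 hB')
  have horth : ∀ i j, i ≠ j → B (v i) (v j) = 0 :=
    fun i j h => LinearMap.isOrthoᵢ_def.mp hv i j h
  have horth' : ∀ i j, i ≠ j → B' (v' i) (v' j) = 0 :=
    fun i j h => LinearMap.isOrthoᵢ_def.mp hv' i j h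
  have hnz : ∀ i, B (v i) (v i) ≠ 0 :=
    fun i => hv.not_isOrtho_basis_self_of_separatingLeft hBnd.1 i
  have hnz' : ∀ i, B' (v' i) (v' i) ≠ 0 :=
    fun i => hv'.not_isOrtho_basis_self_of_separatingLeft hB'nd.1 i
  set bT := Basis.tensorProduct v v'
  have happ : ∀ p q : Fin (finrank ℝ V) × Fin (finrank ℝ V'),
      (LinearMap.BilinForm.tmul B B') (bT p) (bT q)
        = B' (v' p.2) (v' q.2) * B (v p.1) (v q.1) := by
    intro p q
    simp [bT, Basis.tensorProduct_apply', LinearMap.BilinForm.tensorDistrib_tmul,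
      smul_eq_mul]
  have horthT : ∀ p q, p ≠ q →
      (LinearMap.BilinForm.tmul B B') (bT p) (bT q) = 0 := by
    intro p q hpq
    rw [happ]
    by_cases h1 : p.1 = q.1
    · have h2 : p.2 ≠ q.2 := fun h => hpq (Prod.ext h1 h)
      rw [horth' _ _ h2, zero_mul]
    · rw [horth _ _ h1, mul_zero]
  have hnzT : ∀ p, (LinearMap.BilinForm.tmul B B') (bT p) (bT p) ≠ 0 := by
    intro p
    rw [happ]
    exact mul_ne_zero (hnz' p.2) (hnz p.1)
  rw [signature_eq_sum _ bT horthT hnzT, signature_eq_sum B v horth hnz,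
    signature_eq_sum B' v' horth' hnz']
  rw [Fintype.sum_prod_type]
  rw [Finset.sum_mul_sum]
  refine Finset.sum_congr rfl fun i _ => Finset.sum_congr rfl fun j _ => ?_
  rw [happ]
  set d := B (v i) (v i)
  set e := B' (v' j) (v' j)
  have hd := hnz i
  have he := hnz' j
  rcases hd.lt_or_gt with hd' | hd' <;> rcases he.lt_or_gt with he' | he'
  · rw [if_pos (mul_pos_of_neg_of_neg he' hd'), if_neg (asymm hd'), if_neg (asymm he')]; ring
  · rw [if_neg (asymm (mul_neg_of_pos_of_neg he' hd')), if_neg (asymm hd'), if_pos he']; ring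
  · rw [if_neg (asymm (mul_neg_of_neg_of_pos he' hd')), if_pos hd', if_neg (asymm he')]; ring
  · rw [if_pos (mul_pos he' hd'), if_pos hd', if_pos he']; ring
end

section
/- Every infinite virtually cyclic group G admits a surjective homomorphism with finite kernel onto either the infinite cyclic group Z or the infinite dihedral group D∞ = Z/2 * Z/2. -/
open Monoid

/-- The infinite dihedral group `D∞ = ℤ/2 * ℤ/2`. -/
abbrev InfiniteDihedral : Type :=
  Coprod (Multiplicative (ZMod 2)) (Multiplicative (ZMod 2))

open Multiplicative

section Helpers

lemma aux_infinite_cyclic_equiv (A : Type*) [Group A] [IsCyclic A] [Infinite A] :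
    ∃ e : Multiplicative ℤ →* A, Function.Bijective e := by
  obtain ⟨g, hg⟩ := IsCyclic.exists_generator (α := A)
  have hord : ¬ IsOfFinOrder g := by
    intro h
    have hfin : (Subgroup.zpowers g : Set A).Finite := h.finite_zpowers
    have huniv : (Subgroup.zpowers g : Set A) = Set.univ := by
      ext x; simpa using hg x
    rw [huniv] at hfin
    exact Set.infinite_univ hfin
  refine ⟨zpowersHom A g, ?_, ?_⟩
  · intro a b hab
    have hinj := injective_zpow_iff_not_isOfFinOrder.2 hord
    have : a.toAdd = b.toAdd := hinj (by simpa [zpowersHom_apply] using hab)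
    exact Multiplicative.toAdd.injective this
  · intro a
    obtain ⟨k, hk⟩ := Subgroup.mem_zpowers_iff.1 (hg a)
    exact ⟨Multiplicative.ofAdd k, by simpa [zpowersHom_apply] using hk⟩

lemma aux_infinite_of_finiteIndex {G : Type*} [Group G] [Infinite G] (K : Subgroup G)
    [K.FiniteIndex] : Infinite ↥K := by
  by_contra hfin
  rw [not_infinite_iff_finite] at hfin
  have : Finite G :=
    Finite.of_equiv _ (Subgroup.groupEquivQuotientProdSubgroup (s := K)).symm
  exact not_finite G

def aux_hom2 {P : Type*} [Monoid P] (p : P) (hp : p * p = 1) : Multiplicative (ZMod 2) →* P where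
  toFun x := p ^ (x.toAdd.val)
  map_one' := by simp [ZMod.val_zero]
  map_mul' x y := by
    have h2 : ∀ z : ZMod 2, z = 0 ∨ z = 1 := by decide
    have hadd : (x * y).toAdd = x.toAdd + y.toAdd := rfl
    obtain hx | hx := h2 x.toAdd <;> obtain hy | hy := h2 y.toAdd <;>
      simp [hadd, hx, hy, show (1:ZMod 2)+1 = 0 by decide, ZMod.val_zero, ZMod.val_one, pow_succ, hp]

lemma aux_hom2_s {P : Type*} [Monoid P] (p : P) (hp : p * p = 1) :
    aux_hom2 p hp (ofAdd (1 : ZMod 2)) = p := by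
  simp [aux_hom2, ZMod.val_one]

lemma aux_ext_zmod2 {P : Type*} [Monoid P] {f g : Multiplicative (ZMod 2) →* P}
    (h : f (ofAdd 1) = g (ofAdd 1)) : f = g := by
  apply MonoidHom.ext; intro x
  have h2 : ∀ z : ZMod 2, z = 0 ∨ z = 1 := by decide
  obtain hx | hx := h2 x.toAdd
  · have hx1 : x = 1 := by
      have := congrArg (ofAdd (α := ZMod 2)) hx
      simpa using this
    simp [hx1]
  · have hx1 : x = ofAdd 1 := by
      have := congrArg (ofAdd (α := ZMod 2)) hx
      simpa using this
    rw [hx1]; exact h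

/-- inversion as automorphism of `Multiplicative ℤ` -/
def auxInvAutZ : MulAut (Multiplicative ℤ) := MulEquiv.inv (Multiplicative ℤ)

lemma auxInvAutZ_sq : auxInvAutZ * auxInvAutZ = 1 := by
  ext x
  simp [auxInvAutZ]

/-- the action of `ℤ/2` on `ℤ` by inversion -/
def auxDact : Multiplicative (ZMod 2) →* MulAut (Multiplicative ℤ) :=
  aux_hom2 auxInvAutZ auxInvAutZ_sq

abbrev AuxDSD : Type := SemidirectProduct (Multiplicative ℤ) (Multiplicative (ZMod 2)) auxDact

namespace AuxDSD

abbrev σ : Multiplicative (ZMod 2) := ofAdd 1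
abbrev τ : Multiplicative ℤ := ofAdd 1

lemma dact_σ (n : Multiplicative ℤ) : auxDact σ n = n⁻¹ := by
  rw [auxDact, aux_hom2_s]; rfl

lemma σσ : σ * σ = 1 := by
  rw [← ofAdd_add]; norm_num
  decide

lemma σ_ne_one : σ ≠ 1 := by decide

def Bgen : AuxDSD := ⟨τ, σ⟩

lemma Bgen_sq : Bgen * Bgen = 1 := by
  rw [Bgen, SemidirectProduct.mul_def]
  simp [dact_σ, σσ]

def F : InfiniteDihedral →* AuxDSD :=
  Coprod.lift SemidirectProduct.inr (aux_hom2 Bgen Bgen_sq)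

def a' : InfiniteDihedral := Coprod.inl σ
def b' : InfiniteDihedral := Coprod.inr σ

lemma a'_sq : a' * a' = 1 := by rw [a', ← map_mul, σσ, map_one]
lemma b'_sq : b' * b' = 1 := by rw [b', ← map_mul, σσ, map_one]

def L : AuxDSD →* InfiniteDihedral :=
  SemidirectProduct.lift (zpowersHom _ (b' * a')) (aux_hom2 a' a'_sq) (by
    intro g
    have h2 : ∀ z : ZMod 2, z = 0 ∨ z = 1 := by decide
    obtain hx | hx := h2 g.toAdd
    · have hg : g = 1 := by
        have := congrArg (ofAdd (α := ZMod 2)) hx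
        simpa using this
      subst hg
      ext
      simp
    · have hg : g = σ := by
        have := congrArg (ofAdd (α := ZMod 2)) hx
        simpa using this
      subst hg
      apply MonoidHom.ext_mint
      simp only [MonoidHom.comp_apply, MulEquiv.coe_toMonoidHom, MulAut.conj_apply,
        aux_hom2_s, dact_σ]
      rw [zpowersHom_apply, zpowersHom_apply]
      simp only [toAdd_inv, toAdd_ofAdd, zpow_neg, zpow_one]
      rw [mul_inv_rev]
      rw [inv_eq_of_mul_eq_one_right a'_sq, inv_eq_of_mul_eq_one_right b'_sq]
      rw [mul_assoc, mul_assoc, a'_sq, mul_one])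

lemma LF_id : L.comp F = MonoidHom.id _ := by
  apply Coprod.hom_ext
  · apply aux_ext_zmod2
    simp only [MonoidHom.comp_apply, MonoidHom.id_apply]
    rw [F, Coprod.lift_apply_inl]
    rw [L, SemidirectProduct.lift_inr, aux_hom2_s, a']
  · apply aux_ext_zmod2
    simp only [MonoidHom.comp_apply, MonoidHom.id_apply]
    rw [F, Coprod.lift_apply_inr, aux_hom2_s]
    rw [Bgen, SemidirectProduct.mk_eq_inl_mul_inr, map_mul]
    rw [L, SemidirectProduct.lift_inl, SemidirectProduct.lift_inr, aux_hom2_s]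
    rw [zpowersHom_apply]
    simp only [toAdd_ofAdd, zpow_one]
    rw [mul_assoc, a'_sq, mul_one, b']

lemma F_τ : F (b' * a') = SemidirectProduct.inl τ := by
  rw [map_mul, F, b', a', Coprod.lift_apply_inl, Coprod.lift_apply_inr, aux_hom2_s]
  rw [Bgen, SemidirectProduct.mul_def]
  congr 1

lemma F_surj : Function.Surjective F := by
  have hinl : ∀ m : Multiplicative ℤ, SemidirectProduct.inl m ∈ F.range := by
    intro m
    refine ⟨(b' * a') ^ m.toAdd, ?_⟩
    rw [map_zpow, F_τ, ← map_zpow]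
    congr 1
    rw [← ofAdd_zsmul]
    simp
  have hinr : ∀ h : Multiplicative (ZMod 2), SemidirectProduct.inr h ∈ F.range := by
    intro h
    have h2 : ∀ z : ZMod 2, z = 0 ∨ z = 1 := by decide
    obtain hx | hx := h2 h.toAdd
    · have hg : h = 1 := by
        have := congrArg (ofAdd (α := ZMod 2)) hx
        simpa using this
      subst hg
      rw [map_one]
      exact one_mem _
    · have hg : h = σ := by
        have := congrArg (ofAdd (α := ZMod 2)) hx
        simpa using this
      subst hg
      exact ⟨a', by rw [F, a', Coprod.lift_apply_inl]⟩
  intro x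
  obtain ⟨y, hy⟩ := mul_mem (hinl x.left) (hinr x.right)
  exact ⟨y, by rw [hy, SemidirectProduct.inl_left_mul_inr_right]⟩

lemma F_inj : Function.Injective F := by
  intro x y h
  have hx := DFunLike.congr_fun LF_id x
  have hy := DFunLike.congr_fun LF_id y
  simp only [MonoidHom.comp_apply, MonoidHom.id_apply] at hx hy
  rw [← hx, ← hy, h]

noncomputable def E : InfiniteDihedral ≃* AuxDSD :=
  MulEquiv.ofBijective F ⟨F_inj, F_surj⟩

end AuxDSD

end Helpers

/-- Every infinite virtually cyclic group `G` (i.e. containing a cyclic subgroup of finite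
index) admits a surjective homomorphism with finite kernel onto either the infinite cyclic
group `ℤ` or the infinite dihedral group `D∞ = ℤ/2 * ℤ/2`. -/
theorem infinite_virtually_cyclic_structure (G : Type) [Group G] [Infinite G]
    (hvc : ∃ H : Subgroup G, IsCyclic H ∧ H.index ≠ 0) :
    (∃ f : G →* Multiplicative ℤ, Function.Surjective f ∧ Finite f.ker) ∨
    (∃ f : G →* InfiniteDihedral, Function.Surjective f ∧ Finite f.ker) := by
  classical
  obtain ⟨H, hHcyc, hHind⟩ := hvc
  haveI : H.FiniteIndex := ⟨hHind⟩
  set N : Subgroup G := H.normalCore with hNdef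
  haveI hNnorm : N.Normal := H.normalCore_normal
  haveI : N.FiniteIndex := Subgroup.finiteIndex_normalCore H
  haveI : IsCyclic ↥N := by
    have hle : N ≤ H := H.normalCore_le
    exact isCyclic_of_surjective (Subgroup.subgroupOfEquivOfLe hle)
      (Subgroup.subgroupOfEquivOfLe hle).surjective
  haveI : Infinite ↥N := aux_infinite_of_finiteIndex N
  obtain ⟨eN, heN⟩ := aux_infinite_cyclic_equiv ↥N
  set equivN : ↥N ≃* Multiplicative ℤ := (MulEquiv.ofBijective eN heN).symm with hequivN
  -- torsion-freeness of N
  have tfree : ∀ n ∈ N, ∀ m : ℕ, m ≠ 0 → n ^ m = 1 → n = 1 := by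
    intro n hn m hm h1
    have hsub : (⟨n, hn⟩ : ↥N) ^ m = 1 := by
      apply Subtype.ext
      simpa using h1
    have h2 : (equivN ⟨n, hn⟩) ^ m = 1 := by rw [← map_pow, hsub, map_one]
    have h3 : (m : ℤ) * (equivN ⟨n, hn⟩).toAdd = 0 := by
      have := congrArg Multiplicative.toAdd h2
      simpa [toAdd_pow, nsmul_eq_mul] using this
    have h4 : (equivN ⟨n, hn⟩).toAdd = 0 := by
      rcases mul_eq_zero.1 h3 with h | h
      · exact absurd (by exact_mod_cast h) hm
      · exact h
    have h5 : equivN ⟨n, hn⟩ = 1 := by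
      have := congrArg (ofAdd (α := ℤ)) h4
      simpa using this
    have h6 : (⟨n, hn⟩ : ↥N) = 1 := by
      apply equivN.injective
      rw [h5, map_one]
    simpa using congrArg Subtype.val h6
  -- generator of N
  set t : G := ↑(equivN.symm (ofAdd 1)) with htdef
  have ht : t ∈ N := (equivN.symm (ofAdd 1)).2
  have hgen : ∀ n ∈ N, ∃ k : ℤ, n = t ^ k := by
    intro n hn
    refine ⟨(equivN ⟨n, hn⟩).toAdd, ?_⟩
    have h1 : equivN.symm (ofAdd (equivN ⟨n, hn⟩).toAdd) = ⟨n, hn⟩ := by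
      simp
    have h2 : (ofAdd (equivN ⟨n, hn⟩).toAdd) = (ofAdd (1:ℤ)) ^ (equivN ⟨n, hn⟩).toAdd := by
      rw [← ofAdd_zsmul]; simp
    rw [h2, map_zpow] at h1
    have := congrArg Subtype.val h1
    simpa using this.symm
  have tinj : ∀ j k : ℤ, t ^ j = t ^ k → j = k := by
    intro j k hjk
    have h1 : (equivN.symm (ofAdd 1)) ^ j = (equivN.symm (ofAdd 1)) ^ k := by
      apply Subtype.ext
      simpa using hjk
    have h2 := congrArg equivN h1
    rw [map_zpow, map_zpow] at h2
    simp only [MulEquiv.apply_symm_apply] at h2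
    have h3 := congrArg Multiplicative.toAdd h2
    simpa using h3
  -- the conjugation dichotomy
  set C : Subgroup G := Subgroup.centralizer (N : Set G) with hCdef
  have dich : ∀ g : G, g ∈ C ∨ ∀ n ∈ N, g * n * g⁻¹ = n⁻¹ := by
    intro g
    have h1 : g * t * g⁻¹ ∈ N := hNnorm.conj_mem t ht g
    have h2 : g⁻¹ * t * g ∈ N := by simpa using hNnorm.conj_mem t ht g⁻¹
    obtain ⟨j, hj⟩ := hgen _ h1
    obtain ⟨i, hi⟩ := hgen _ h2
    have key : t ^ (1:ℤ) = t ^ (j * i) := by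
      have e1 : g * (g⁻¹ * t * g) * g⁻¹ = t := by group
      calc t ^ (1:ℤ) = t := zpow_one t
        _ = g * (t ^ i) * g⁻¹ := by rw [← hi, e1]
        _ = (g * t * g⁻¹) ^ i := by rw [conj_zpow]
        _ = (t ^ j) ^ i := by rw [← hj]
        _ = t ^ (j * i) := by rw [← zpow_mul]
    have hji : j * i = 1 := (tinj _ _ key).symm
    obtain ⟨hj1, _⟩ | ⟨hj1, _⟩ := Int.mul_eq_one_iff_eq_one_or_neg_one.1 hji
    · left
      rw [Subgroup.mem_centralizer_iff]
      intro n hn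
      obtain ⟨k, hk⟩ := hgen n hn
      have : g * n * g⁻¹ = n := by
        rw [hk, ← conj_zpow, hj, hj1, zpow_one]
      calc n * g = (g * n * g⁻¹) * g := by rw [this]
        _ = g * n := inv_mul_cancel_right _ _
    · right
      intro n hn
      obtain ⟨k, hk⟩ := hgen n hn
      rw [hk, ← conj_zpow, hj, hj1]
      rw [← zpow_mul, mul_comm, zpow_mul, zpow_neg_one]
  have hNC : N ≤ C := by
    intro n hn
    rw [Subgroup.mem_centralizer_iff]
    intro m hm
    obtain ⟨a, ha⟩ := hgen m hm
    obtain ⟨b, hb⟩ := hgen n hn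
    rw [ha, hb, ← zpow_add, ← zpow_add, add_comm]
  haveI : C.FiniteIndex := by
    constructor
    intro h0
    exact Subgroup.FiniteIndex.index_ne_zero (H := N)
      (Nat.eq_zero_of_zero_dvd (h0 ▸ Subgroup.index_dvd_of_le hNC))
  have hconjC : ∀ (g c : G), c ∈ C → g * c * g⁻¹ ∈ C := by
    intro g c hc
    rw [Subgroup.mem_centralizer_iff]
    intro n hn
    have h1 : g⁻¹ * n * g ∈ N := by simpa using hNnorm.conj_mem n hn g⁻¹
    have h2 := Subgroup.mem_centralizer_iff.1 hc _ h1
    calc n * (g * c * g⁻¹) = g * ((g⁻¹ * n * g) * c) * g⁻¹ := by group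
      _ = g * (c * (g⁻¹ * n * g)) * g⁻¹ := by rw [h2]
      _ = (g * c * g⁻¹) * n := by group
  -- the power homomorphism χ : C →* N
  set N₁ : Subgroup ↥C := N.subgroupOf C with hN₁def
  have hN₁le : N₁ ≤ Subgroup.center ↥C := by
    intro x hx
    rw [Subgroup.mem_center_iff]
    intro y
    apply Subtype.ext
    have := Subgroup.mem_centralizer_iff.1 y.2 _ (Subgroup.mem_subgroupOf.1 hx)
    simpa using this.symm
  haveI : N₁.FiniteIndex := by
    constructor
    intro h0
    apply Subgroup.FiniteIndex.index_ne_zero (H := N)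
    rw [← Subgroup.relIndex_mul_index hNC]
    have : N.relIndex C = N₁.index := rfl
    rw [this, h0, zero_mul]
  haveI : (Subgroup.center ↥C).FiniteIndex := by
    constructor
    intro h0
    exact Subgroup.FiniteIndex.index_ne_zero (H := N₁)
      (Nat.eq_zero_of_zero_dvd (h0 ▸ Subgroup.index_dvd_of_le hN₁le))
  set N₂ : Subgroup ↥(Subgroup.center ↥C) := N₁.subgroupOf (Subgroup.center ↥C) with hN₂def
  haveI : N₂.FiniteIndex := by
    constructor
    intro h0
    apply Subgroup.FiniteIndex.index_ne_zero (H := N₁)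
    rw [← Subgroup.relIndex_mul_index hN₁le]
    have : N₁.relIndex (Subgroup.center ↥C) = N₂.index := rfl
    rw [this, h0, zero_mul]
  set m₁ : ℕ := (Subgroup.center ↥C).index with hm₁
  set m₂ : ℕ := N₂.index with hm₂
  set M : ℕ := m₁ * m₂ with hMdef
  have hM : M ≠ 0 :=
    Nat.mul_ne_zero (Subgroup.FiniteIndex.index_ne_zero) (Subgroup.FiniteIndex.index_ne_zero)
  open scoped IsMulCommutative in
  set χraw : ↥C →* G :=
    C.subtype.comp ((Subgroup.center ↥C).subtype.comp
      ((powMonoidHom m₂).comp (MonoidHom.transferCenterPow ↥C))) with hχraw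
  have key1 : ∀ c : ↥C, χraw c = (c : G) ^ M := by
    intro c
    have h1 : ((MonoidHom.transferCenterPow ↥C c : ↥C)) = c ^ m₁ :=
      MonoidHom.transferCenterPow_apply (G := ↥C) c
    open scoped IsMulCommutative in
    show ((((powMonoidHom m₂ (MonoidHom.transferCenterPow ↥C c)) : ↥(Subgroup.center ↥C)) : ↥C) : G) = (c : G) ^ M
    rw [powMonoidHom_apply]
    push_cast [h1]
    rw [← pow_mul]
  have key2 : ∀ c : ↥C, χraw c ∈ N := by
    intro c
    have h := Subgroup.pow_index_mem N₂ (MonoidHom.transferCenterPow ↥C c)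
    rw [hN₂def, Subgroup.mem_subgroupOf, hN₁def, Subgroup.mem_subgroupOf] at h
    exact h
  set χ : ↥C →* ↥N := χraw.codRestrict N key2 with hχdef
  have hχ : ∀ c : ↥C, (χ c : G) = (c : G) ^ M := fun c => key1 c
  -- finiteness of the torsion part
  have hfinT : Finite {g : G // g ∈ C ∧ g ^ M = 1} := by
    have hinj : Function.Injective
        (fun x : {g : G // g ∈ C ∧ g ^ M = 1} => (QuotientGroup.mk x.1 : G ⧸ N)) := by
      intro x y hxy
      have hz : x.1⁻¹ * y.1 ∈ N := QuotientGroup.eq.1 hxy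
      have hcomm : Commute x.1 (x.1⁻¹ * y.1) :=
        (Subgroup.mem_centralizer_iff.1 x.2.1 _ hz).symm
      have h1 : (x.1 * (x.1⁻¹ * y.1)) ^ M = 1 := by
        rw [mul_inv_cancel_left]
        exact y.2.2
      rw [hcomm.mul_pow, x.2.2, one_mul] at h1
      have h2 : x.1⁻¹ * y.1 = 1 := tfree _ hz M hM h1
      apply Subtype.ext
      have h9 := congrArg (x.1 * ·) h2
      exact (by simpa [mul_inv_cancel_left] using h9 : (y.1 : G) = x.1).symm
    exact Finite.of_injective _ hinj
  -- kernel of χ is finite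
  have hχker : ∀ c : ↥C, χ c = 1 → (c : G) ^ M = 1 := by
    intro c hc
    have := congrArg (Subtype.val : ↥N → G) hc
    rw [hχ c] at this
    simpa using this
  haveI hfinkerχ : Finite ↥χ.ker := by
    have hinj : Function.Injective
        (fun x : ↥χ.ker => (⟨(x.1 : G), x.1.2, hχker x.1 x.2⟩ : {g : G // g ∈ C ∧ g ^ M = 1})) := by
      intro x y hxy
      exact Subtype.ext (Subtype.ext
        (congrArg (fun z : {g : G // g ∈ C ∧ g ^ M = 1} => z.1) hxy))
    exact Finite.of_injective _ hinj
  -- the projection ζ : C →* Multiplicative ℤ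
  haveI : Infinite ↥C := aux_infinite_of_finiteIndex C
  haveI : Infinite ↥χ.range := by
    by_contra hfin
    rw [not_infinite_iff_finite] at hfin
    haveI : Finite (↥C ⧸ χ.ker) :=
      Finite.of_equiv _ (QuotientGroup.quotientKerEquivRange χ).symm.toEquiv
    have : Finite ↥C :=
      Finite.of_equiv _ (Subgroup.groupEquivQuotientProdSubgroup (s := χ.ker)).symm
    exact not_finite ↥C
  obtain ⟨eR0, heR0⟩ := aux_infinite_cyclic_equiv ↥χ.range
  set eR : ↥χ.range ≃* Multiplicative ℤ := (MulEquiv.ofBijective eR0 heR0).symm with heRdef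
  set ζ : ↥C →* Multiplicative ℤ := eR.toMonoidHom.comp χ.rangeRestrict with hζdef
  have hζsurj : Function.Surjective ζ :=
    eR.surjective.comp χ.rangeRestrict_surjective
  have hζker : ∀ c : ↥C, ζ c = 1 → (c : G) ^ M = 1 := by
    intro c hc
    have h1 : χ.rangeRestrict c = 1 := by
      apply eR.injective
      rw [map_one]
      exact hc
    have h2 : χ c = 1 := by
      have := congrArg (Subtype.val : ↥χ.range → ↥N) h1
      rw [MonoidHom.coe_rangeRestrict] at this
      simpa using this
    exact hχker c h2
  -- case split
  by_cases hC : ∀ g : G, g ∈ C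
  · -- central case : map onto ℤ
    left
    set j : G →* ↥C :=
      { toFun := fun g => ⟨g, hC g⟩
        map_one' := rfl
        map_mul' := fun _ _ => rfl } with hjdef
    refine ⟨ζ.comp j, ?_, ?_⟩
    · intro z
      obtain ⟨c, hc⟩ := hζsurj z
      exact ⟨(c : G), by simpa [hjdef] using hc⟩
    · have hinj : Function.Injective
          (fun x : ↥(ζ.comp j).ker =>
            (⟨x.1, hC x.1, hζker ⟨x.1, hC x.1⟩ x.2⟩ : {g : G // g ∈ C ∧ g ^ M = 1})) := by
        intro x y hxy
        exact Subtype.ext (congrArg (fun z : {g : G // g ∈ C ∧ g ^ M = 1} => z.1) hxy)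
      exact Finite.of_injective _ hinj
  · -- dihedral case
    right
    push_neg at hC
    obtain ⟨g₀, hg₀⟩ := hC
    have hg₀inv : ∀ n ∈ N, g₀ * n * g₀⁻¹ = n⁻¹ := (dich g₀).resolve_left hg₀
    have htwo : ∀ a b : G, a ∉ C → b ∉ C → a * b ∈ C := by
      intro a b ha hb
      have hai := (dich a).resolve_left ha
      have hbi := (dich b).resolve_left hb
      rw [Subgroup.mem_centralizer_iff]
      intro n hn
      have h1 : b * n * b⁻¹ = n⁻¹ := hbi n hn
      have h2 : a * n⁻¹ * a⁻¹ = n := by rw [hai n⁻¹ (inv_mem hn), inv_inv]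
      have h3 : (a*b) * n * (a*b)⁻¹ = n := by
        calc (a*b) * n * (a*b)⁻¹ = a * (b * n * b⁻¹) * a⁻¹ := by group
          _ = a * n⁻¹ * a⁻¹ := by rw [h1]
          _ = n := h2
      calc n * (a*b) = ((a*b) * n * (a*b)⁻¹) * (a*b) := by rw [h3]
        _ = (a*b) * n := inv_mul_cancel_right _ _
    have hg₀' : g₀⁻¹ ∉ C := fun h => hg₀ (by simpa using inv_mem h)
    have hdec : ∀ g : G, g ∉ C → g * g₀⁻¹ ∈ C := fun g hg => htwo _ _ hg hg₀'
    -- equivariance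
    have hχconj : ∀ (c : G) (hc : c ∈ C),
        χ ⟨g₀ * c * g₀⁻¹, hconjC g₀ c hc⟩ = (χ ⟨c, hc⟩)⁻¹ := by
      intro c hc
      apply Subtype.ext
      have h1 : ((χ ⟨g₀ * c * g₀⁻¹, hconjC g₀ c hc⟩ : ↥N) : G) = (g₀ * c * g₀⁻¹) ^ M := hχ _
      have h2 : ((χ ⟨c, hc⟩ : ↥N) : G) = c ^ M := hχ _
      have h3 : c ^ M ∈ N := h2 ▸ (χ ⟨c, hc⟩).2
      calc ((χ ⟨g₀ * c * g₀⁻¹, hconjC g₀ c hc⟩ : ↥N) : G) = (g₀ * c * g₀⁻¹) ^ M := h1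
        _ = g₀ * c ^ M * g₀⁻¹ := conj_pow
        _ = (c ^ M)⁻¹ := hg₀inv _ h3
        _ = (((χ ⟨c, hc⟩)⁻¹ : ↥N) : G) := by rw [← h2]; simp
    have hζconj : ∀ (c : G) (hc : c ∈ C),
        ζ ⟨g₀ * c * g₀⁻¹, hconjC g₀ c hc⟩ = (ζ ⟨c, hc⟩)⁻¹ := by
      intro c hc
      show eR (χ.rangeRestrict _) = (eR (χ.rangeRestrict _))⁻¹
      rw [← map_inv]
      congr 1
      apply Subtype.ext
      rw [MonoidHom.coe_rangeRestrict]
      show (χ _ : ↥N) = ((χ.rangeRestrict ⟨c, hc⟩)⁻¹ : ↥χ.range)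
      rw [hχconj c hc]
      simp [MonoidHom.coe_rangeRestrict]
    have hζg2 : ζ ⟨g₀ * g₀, htwo _ _ hg₀ hg₀⟩ = 1 := by
      have hχg2 : χ ⟨g₀ * g₀, htwo _ _ hg₀ hg₀⟩ = 1 := by
        apply Subtype.ext
        have h1 : ((χ ⟨g₀ * g₀, htwo _ _ hg₀ hg₀⟩ : ↥N) : G) = (g₀ * g₀) ^ M := hχ _
        have hmem : (g₀ * g₀) ^ M ∈ N := h1 ▸ (χ _).2
        have hcomm : Commute g₀ ((g₀ * g₀) ^ M) :=
          ((Commute.refl g₀).mul_right (Commute.refl g₀)).pow_right M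
        have hfix : g₀ * ((g₀ * g₀) ^ M) * g₀⁻¹ = (g₀ * g₀) ^ M := by
          rw [hcomm.eq, mul_inv_cancel_right]
        have hinv2 : g₀ * ((g₀ * g₀) ^ M) * g₀⁻¹ = ((g₀ * g₀) ^ M)⁻¹ := hg₀inv _ hmem
        have hsq : ((g₀ * g₀) ^ M) ^ 2 = 1 := by
          have hxx : (g₀ * g₀) ^ M = ((g₀ * g₀) ^ M)⁻¹ := hfix.symm.trans hinv2
          rw [pow_two]
          nth_rewrite 2 [hxx]
          simp
        have := tfree _ hmem 2 (by norm_num) hsq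
        rw [h1, this]
        simp
      show eR (χ.rangeRestrict _) = 1
      rw [← map_one eR]
      congr 1
      apply Subtype.ext
      rw [MonoidHom.coe_rangeRestrict, hχg2]
      rfl
    have hζmul : ∀ (a b : G) (ha : a ∈ C) (hb : b ∈ C) (hab : a * b ∈ C),
        ζ ⟨a * b, hab⟩ = ζ ⟨a, ha⟩ * ζ ⟨b, hb⟩ := by
      intro a b ha hb hab
      rw [← map_mul]
      rfl
    have hζcongr : ∀ (a b : G) (ha : a ∈ C) (hb : b ∈ C), a = b →
        ζ ⟨a, ha⟩ = ζ ⟨b, hb⟩ := by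
      intro a b ha hb h
      subst h
      rfl
    -- the homomorphism into the semidirect product
    set σ' : Multiplicative (ZMod 2) := ofAdd 1 with hσ'
    set ffun : G → AuxDSD := fun g =>
      if h : g ∈ C then ⟨ζ ⟨g, h⟩, 1⟩ else ⟨ζ ⟨g * g₀⁻¹, hdec g h⟩, σ'⟩ with hffun
    have hmul : ∀ a b : G, ffun (a * b) = ffun a * ffun b := by
      intro a b
      by_cases ha : a ∈ C <;> by_cases hb : b ∈ C
      · have hab : a * b ∈ C := mul_mem ha hb
        rw [hffun]
        simp only [dif_pos ha, dif_pos hb, dif_pos hab]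
        rw [SemidirectProduct.mul_def]
        simp only [map_one, MulAut.one_apply, one_mul]
        congr 1
        exact hζmul a b ha hb hab
      · have hab : a * b ∉ C := fun h => hb (by
          have : b = a⁻¹ * (a * b) := by group
          rw [this]; exact mul_mem (inv_mem ha) h)
        rw [hffun]
        simp only [dif_pos ha, dif_neg hb, dif_neg hab]
        rw [SemidirectProduct.mul_def]
        simp only [map_one, MulAut.one_apply, one_mul]
        congr 1
        have h1 : a * b * g₀⁻¹ = a * (b * g₀⁻¹) := by group
        rw [hζcongr _ _ _ (mul_mem ha (hdec b hb)) h1]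
        exact hζmul a (b * g₀⁻¹) ha (hdec b hb) _
      · have hab : a * b ∉ C := fun h => ha (by
          have : a = (a * b) * b⁻¹ := by group
          rw [this]; exact mul_mem h (inv_mem hb))
        rw [hffun]
        simp only [dif_neg ha, dif_pos hb, dif_neg hab]
        rw [SemidirectProduct.mul_def]
        rw [AuxDSD.dact_σ]
        congr 1
        · have h1 : a * b * g₀⁻¹ = (a * g₀⁻¹) * (g₀ * b * g₀⁻¹) := by group
          rw [hζcongr _ _ _ (mul_mem (hdec a ha) (hconjC g₀ b hb)) h1]
          rw [hζmul _ _ (hdec a ha) (hconjC g₀ b hb) _]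
          rw [hζconj b hb]
      · have hab : a * b ∈ C := htwo a b ha hb
        rw [hffun]
        simp only [dif_neg ha, dif_neg hb, dif_pos hab]
        rw [SemidirectProduct.mul_def]
        rw [AuxDSD.dact_σ]
        congr 1
        · have h1 : a * b = (a * g₀⁻¹) * (g₀ * b) := by group
          have hg₀b : g₀ * b ∈ C := htwo g₀ b hg₀ hb
          rw [hζcongr _ _ hab (mul_mem (hdec a ha) hg₀b) h1]
          rw [hζmul _ _ (hdec a ha) hg₀b _]
          congr 1
          have h2 : g₀ * b = (g₀ * (b * g₀⁻¹) * g₀⁻¹) * (g₀ * g₀) := by group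
          rw [hζcongr _ _ hg₀b (mul_mem (hconjC g₀ _ (hdec b hb)) (htwo _ _ hg₀ hg₀)) h2]
          rw [hζmul _ _ (hconjC g₀ _ (hdec b hb)) (htwo _ _ hg₀ hg₀) _]
          rw [hζconj _ (hdec b hb), hζg2, mul_one]
        · exact AuxDSD.σσ.symm
    set f : G →* AuxDSD := MonoidHom.mk' ffun hmul with hfdef
    have hfsurj : Function.Surjective f := by
      intro x
      have h2 : ∀ z : ZMod 2, z = 0 ∨ z = 1 := by decide
      obtain hx | hx := h2 x.right.toAdd
      · have hg : x.right = 1 := by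
          have := congrArg (ofAdd (α := ZMod 2)) hx
          simpa using this
        obtain ⟨y, hy⟩ := hζsurj x.left
        refine ⟨(y : G), ?_⟩
        show ffun (y : G) = x
        rw [hffun]
        simp only [dif_pos y.2]
        have : (⟨(y : G), y.2⟩ : ↥C) = y := rfl
        rw [this, hy]
        exact SemidirectProduct.ext rfl hg.symm
      · have hg : x.right = σ' := by
          have := congrArg (ofAdd (α := ZMod 2)) hx
          simpa using this
        obtain ⟨y, hy⟩ := hζsurj x.left
        have hyg : (y : G) * g₀ ∉ C := by
          intro h
          apply hg₀
          have : g₀ = (y : G)⁻¹ * ((y : G) * g₀) := by group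
          rw [this]
          exact mul_mem (inv_mem y.2) h
        refine ⟨(y : G) * g₀, ?_⟩
        show ffun ((y : G) * g₀) = x
        rw [hffun]
        simp only [dif_neg hyg]
        have h1 : (y : G) * g₀ * g₀⁻¹ = (y : G) := by group
        rw [hζcongr _ _ (hdec _ hyg) y.2 h1, hy]
        exact SemidirectProduct.ext rfl hg.symm
    have hfker : Finite ↥f.ker := by
      have hker : ∀ g : G, f g = 1 → g ∈ C ∧ g ^ M = 1 := by
        intro g hg
        have hg' : ffun g = 1 := hg
        by_cases hgc : g ∈ C
        · refine ⟨hgc, ?_⟩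
          apply hζker ⟨g, hgc⟩
          have := congrArg SemidirectProduct.left hg'
          rw [hffun] at this
          simp only [dif_pos hgc] at this
          exact this
        · exfalso
          have := congrArg SemidirectProduct.right hg'
          rw [hffun] at this
          simp only [dif_neg hgc] at this
          exact AuxDSD.σ_ne_one this
      have hinj : Function.Injective
          (fun x : ↥f.ker =>
            (⟨x.1, hker x.1 x.2⟩ : {g : G // g ∈ C ∧ g ^ M = 1})) := by
        intro x y hxy
        exact Subtype.ext (congrArg (fun z : {g : G // g ∈ C ∧ g ^ M = 1} => z.1) hxy)
      exact Finite.of_injective _ hinj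
    refine ⟨AuxDSD.E.symm.toMonoidHom.comp f, ?_, ?_⟩
    · exact AuxDSD.E.symm.surjective.comp hfsurj
    · have hkereq : (AuxDSD.E.symm.toMonoidHom.comp f).ker = f.ker := by
        ext g
        simp only [MonoidHom.mem_ker, MonoidHom.comp_apply, MulEquiv.coe_toMonoidHom]
        constructor
        · intro h
          apply AuxDSD.E.symm.injective
          rw [h, map_one]
        · intro h
          rw [h, map_one]
      rw [hkereq]
      exact hfker
end

section
/- The group of units of the group ring Z[Z/4] that are of the form ±g for g in Z/4 exhausts all units of Z[Z/4] of finite order, but Z[Z/5] contains a unit of infinite order (e.g., 1 − g − g⁴ + ... arising from the golden ratio unit in Z[ζ_5]), witnessing that K_1(Z[Z/5]) is strictly larger than its trivial units. -/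
set_option maxHeartbeats 1000000

open MonoidAlgebra Multiplicative

private def zmodPowHom (n : ℕ) [NeZero n] {M : Type*} [Monoid M] (r : M) (h : r ^ n = 1) :
    Multiplicative (ZMod n) →* M where
  toFun x := r ^ (Multiplicative.toAdd x).val
  map_one' := by simp
  map_mul' a b := by
    show r ^ (Multiplicative.toAdd a + Multiplicative.toAdd b).val = _
    rw [ZMod.val_add, ← pow_eq_pow_mod _ h, pow_add]

private lemma finsupp_decomp4 (x : Multiplicative (ZMod 4) →₀ ℤ) :
    x = Finsupp.single (Multiplicative.ofAdd 0) (x (Multiplicative.ofAdd 0))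
      + Finsupp.single (Multiplicative.ofAdd 1) (x (Multiplicative.ofAdd 1))
      + Finsupp.single (Multiplicative.ofAdd 2) (x (Multiplicative.ofAdd 2))
      + Finsupp.single (Multiplicative.ofAdd 3) (x (Multiplicative.ofAdd 3)) := by
  ext g
  have : g = Multiplicative.ofAdd 0 ∨ g = Multiplicative.ofAdd 1 ∨ g = Multiplicative.ofAdd 2
      ∨ g = Multiplicative.ofAdd 3 := by revert g; decide
  rcases this with h|h|h|h <;> subst h <;>
    simp (config := { decide := true }) [Finsupp.single_apply]

private lemma monoidalg_decomp4 (x : MonoidAlgebra ℤ (Multiplicative (ZMod 4))) :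
    x = MonoidAlgebra.single (Multiplicative.ofAdd 0) (x.coeff (Multiplicative.ofAdd 0))
      + MonoidAlgebra.single (Multiplicative.ofAdd 1) (x.coeff (Multiplicative.ofAdd 1))
      + MonoidAlgebra.single (Multiplicative.ofAdd 2) (x.coeff (Multiplicative.ofAdd 2))
      + MonoidAlgebra.single (Multiplicative.ofAdd 3) (x.coeff (Multiplicative.ofAdd 3)) :=
  MonoidAlgebra.coeff_injective (finsupp_decomp4 x.coeff)

/-- The trivial units `± g` (for `g ∈ ℤ/4`) exhaust all units of finite order of the group
ring `ℤ[ℤ/4]`, but the group ring `ℤ[ℤ/5]` contains a unit of infinite order, witnessing that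
`K₁(ℤ[ℤ/5])` is strictly larger than its trivial units. -/
theorem units_int_group_ring_z4_z5 :
    (∀ u : (MonoidAlgebra ℤ (Multiplicative (ZMod 4)))ˣ, IsOfFinOrder u →
      ∃ g : Multiplicative (ZMod 4),
        (u : MonoidAlgebra ℤ (Multiplicative (ZMod 4))) = MonoidAlgebra.single g 1 ∨
        (u : MonoidAlgebra ℤ (Multiplicative (ZMod 4))) = -MonoidAlgebra.single g 1) ∧
    ∃ v : (MonoidAlgebra ℤ (Multiplicative (ZMod 5)))ˣ, ¬IsOfFinOrder v := by
  constructor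
  · intro u hfin0
    set a := (u : MonoidAlgebra ℤ (Multiplicative (ZMod 4))).coeff (Multiplicative.ofAdd 0) with ha
    set b := (u : MonoidAlgebra ℤ (Multiplicative (ZMod 4))).coeff (Multiplicative.ofAdd 1) with hb
    set c := (u : MonoidAlgebra ℤ (Multiplicative (ZMod 4))).coeff (Multiplicative.ofAdd 2) with hc
    set d := (u : MonoidAlgebra ℤ (Multiplicative (ZMod 4))).coeff (Multiplicative.ofAdd 3) with hd
    have hu := monoidalg_decomp4 (u : MonoidAlgebra ℤ (Multiplicative (ZMod 4)))
    rw [← ha, ← hb, ← hc, ← hd] at hu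
    -- evaluation homs
    have h1 : ((1 : ℤ)) ^ 4 = 1 := by norm_num
    have h2 : ((-1 : ℤ)) ^ 4 = 1 := by norm_num
    have h3 : ((⟨0, 1⟩ : GaussianInt)) ^ 4 = 1 := by
      have : (⟨0, 1⟩ : GaussianInt) * ⟨0, 1⟩ = -1 := by
        ext <;> simp [Zsqrtd.re_mul, Zsqrtd.im_mul]
      calc (⟨0, 1⟩ : GaussianInt) ^ 4 = (⟨0,1⟩ * ⟨0,1⟩) * (⟨0,1⟩ * ⟨0,1⟩) := by ring
      _ = 1 := by rw [this]; ring
    set φ1 := (MonoidAlgebra.lift ℤ ℤ (Multiplicative (ZMod 4))) (zmodPowHom 4 1 h1) with hφ1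
    set φ2 := (MonoidAlgebra.lift ℤ ℤ (Multiplicative (ZMod 4))) (zmodPowHom 4 (-1) h2) with hφ2
    set φ3 := (MonoidAlgebra.lift ℤ GaussianInt (Multiplicative (ZMod 4)))
        (zmodPowHom 4 ⟨0,1⟩ h3) with hφ3
    have v0 : ((0 : ZMod 4)).val = 0 := by decide
    have v1 : ((1 : ZMod 4)).val = 1 := by decide
    have v2 : ((2 : ZMod 4)).val = 2 := by decide
    have v3 : ((3 : ZMod 4)).val = 3 := by decide
    have e1 : φ1 (u : MonoidAlgebra ℤ (Multiplicative (ZMod 4))) = a + b + c + d := by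
      rw [hu]
      simp (config := { decide := true }) [hφ1, MonoidAlgebra.lift_single, zmodPowHom,
        v0, v1, v2, v3, zsmul_eq_mul]
    have e2 : φ2 (u : MonoidAlgebra ℤ (Multiplicative (ZMod 4))) = a - b + c - d := by
      rw [hu]
      simp (config := { decide := true }) [hφ2, MonoidAlgebra.lift_single, zmodPowHom,
        v0, v1, v2, v3, zsmul_eq_mul]
      ring
    have e3 : φ3 (u : MonoidAlgebra ℤ (Multiplicative (ZMod 4))) = ⟨a - c, b - d⟩ := by
      rw [hu]
      simp (config := { decide := true }) [hφ3, MonoidAlgebra.lift_single, zmodPowHom,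
        v0, v1, v2, v3, zsmul_eq_mul, pow_succ]
      ext <;> simp [Zsqrtd.re_mul, Zsqrtd.im_mul] <;> ring
    have hu1 : IsUnit (φ1 (u : MonoidAlgebra ℤ (Multiplicative (ZMod 4)))) := u.isUnit.map φ1
    have hu2 : IsUnit (φ2 (u : MonoidAlgebra ℤ (Multiplicative (ZMod 4)))) := u.isUnit.map φ2
    have hu3 : IsUnit (φ3 (u : MonoidAlgebra ℤ (Multiplicative (ZMod 4)))) := u.isUnit.map φ3
    rw [e1, Int.isUnit_iff] at hu1
    rw [e2, Int.isUnit_iff] at hu2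
    rw [e3, ← Zsqrtd.norm_eq_one_iff] at hu3
    have hn3 : (a - c) * (a - c) + (b - d) * (b - d) = 1 := by
      have h' : ((a - c) * (a - c) + (b - d) * (b - d)).natAbs = 1 := by
        convert hu3 using 2
        rw [Zsqrtd.norm_def]
        simp
        ring
      rcases Int.natAbs_eq_iff.mp h' with h|h
      · exact h
      · exfalso
        push_cast at h
        nlinarith [mul_self_nonneg (a - c), mul_self_nonneg (b - d)]
    clear_value a b c d
    clear hu3 e3 e2 e1 hφ3 hφ2 hφ1 φ3 φ2 φ1 h3 h2 h1 v0 v1 v2 v3 ha hb hc hd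
    obtain ⟨p, hp⟩ : ∃ p, a - c = p := ⟨_, rfl⟩
    obtain ⟨q, hq⟩ : ∃ q, b - d = q := ⟨_, rfl⟩
    rw [hp, hq] at hn3
    have hp1 : -1 ≤ p := by nlinarith [mul_self_nonneg q]
    have hp2 : p ≤ 1 := by nlinarith [mul_self_nonneg q]
    have hq1 : -1 ≤ q := by nlinarith [mul_self_nonneg p]
    have hq2 : q ≤ 1 := by nlinarith [mul_self_nonneg p]
    have hpc : p = -1 ∨ p = 0 ∨ p = 1 := by omega
    have hqc : q = -1 ∨ q = 0 ∨ q = 1 := by omega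
    have fin : ∀ (a' b' c' d' : ℤ) (g : Multiplicative (ZMod 4)) (s : ℤ),
        (u : MonoidAlgebra ℤ (Multiplicative (ZMod 4))) = single (ofAdd 0) a' + single (ofAdd 1) b'
          + single (ofAdd 2) c' + single (ofAdd 3) d' →
        (single (ofAdd 0) a' + single (ofAdd 1) b' + single (ofAdd 2) c' + single (ofAdd 3) d'
          : MonoidAlgebra ℤ (Multiplicative (ZMod 4))) = s • single g 1 →
        (s = 1 ∨ s = -1) →
        ∃ g : Multiplicative (ZMod 4),
          (u : MonoidAlgebra ℤ (Multiplicative (ZMod 4))) = MonoidAlgebra.single g 1 ∨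
          (u : MonoidAlgebra ℤ (Multiplicative (ZMod 4))) = -MonoidAlgebra.single g 1 := by
      intro a' b' c' d' g s h1 h2 h3
      refine ⟨g, ?_⟩
      rcases h3 with h3|h3 <;> subst h3
      · exact Or.inl (by rw [h1, h2, one_smul])
      · exact Or.inr (by rw [h1, h2]; simp)
    rcases hpc with h|h|h
    · -- p = -1
      subst h
      rcases hqc with h'|h'|h' <;> subst h'
      · exfalso; norm_num at hn3
      · have : (a = 0 ∧ b = 0 ∧ c = 1 ∧ d = 0) ∨ (a = -1 ∧ b = 0 ∧ c = 0 ∧ d = 0) := by omega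
        rcases this with ⟨h1',h2',h3',h4'⟩|⟨h1',h2',h3',h4'⟩ <;> subst h1' <;> subst h2' <;>
          subst h3' <;> subst h4'
        · exact fin _ _ _ _ (ofAdd 2) 1 hu (by simp) (Or.inl rfl)
        · exact fin _ _ _ _ (ofAdd 0) (-1) hu (by simp) (Or.inr rfl)
      · exfalso; norm_num at hn3
    · -- p = 0
      subst h
      rcases hqc with h'|h'|h' <;> subst h'
      · have : (a = 0 ∧ b = 0 ∧ c = 0 ∧ d = 1) ∨ (a = 0 ∧ b = -1 ∧ c = 0 ∧ d = 0) := by omega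
        rcases this with ⟨h1',h2',h3',h4'⟩|⟨h1',h2',h3',h4'⟩ <;> subst h1' <;> subst h2' <;>
          subst h3' <;> subst h4'
        · exact fin _ _ _ _ (ofAdd 3) 1 hu (by simp) (Or.inl rfl)
        · exact fin _ _ _ _ (ofAdd 1) (-1) hu (by simp) (Or.inr rfl)
      · exfalso; norm_num at hn3
      · have : (a = 0 ∧ b = 1 ∧ c = 0 ∧ d = 0) ∨ (a = 0 ∧ b = 0 ∧ c = 0 ∧ d = -1) := by omega
        rcases this with ⟨h1',h2',h3',h4'⟩|⟨h1',h2',h3',h4'⟩ <;> subst h1' <;> subst h2' <;>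
          subst h3' <;> subst h4'
        · exact fin _ _ _ _ (ofAdd 1) 1 hu (by simp) (Or.inl rfl)
        · exact fin _ _ _ _ (ofAdd 3) (-1) hu (by simp) (Or.inr rfl)
    · -- p = 1
      subst h
      rcases hqc with h'|h'|h' <;> subst h'
      · exfalso; norm_num at hn3
      · have : (a = 1 ∧ b = 0 ∧ c = 0 ∧ d = 0) ∨ (a = 0 ∧ b = 0 ∧ c = -1 ∧ d = 0) := by omega
        rcases this with ⟨h1',h2',h3',h4'⟩|⟨h1',h2',h3',h4'⟩ <;> subst h1' <;> subst h2' <;>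
          subst h3' <;> subst h4'
        · exact fin _ _ _ _ (ofAdd 0) 1 hu (by simp) (Or.inl rfl)
        · exact fin _ _ _ _ (ofAdd 2) (-1) hu (by simp) (Or.inr rfl)
      · exfalso; norm_num at hn3

  · have key : (single (ofAdd (0 : ZMod 5)) (-1) + single (ofAdd (1 : ZMod 5)) 1
          + single (ofAdd (4 : ZMod 5)) 1) *
        (single (ofAdd (0 : ZMod 5)) (-1) + single (ofAdd (2 : ZMod 5)) 1
          + single (ofAdd (3 : ZMod 5)) 1) = (1 : MonoidAlgebra ℤ (Multiplicative (ZMod 5))) := by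
      have m0 : ofAdd (0 : ZMod 5) * ofAdd (0 : ZMod 5) = (1 : Multiplicative (ZMod 5)) := by decide
      have n1 : ofAdd (1 : ZMod 5) * ofAdd (0 : ZMod 5) = ofAdd (1 : ZMod 5) := by decide
      have n2 : ofAdd (4 : ZMod 5) * ofAdd (0 : ZMod 5) = ofAdd (4 : ZMod 5) := by decide
      have n3 : ofAdd (0 : ZMod 5) * ofAdd (2 : ZMod 5) = ofAdd (2 : ZMod 5) := by decide
      have n4 : ofAdd (0 : ZMod 5) * ofAdd (3 : ZMod 5) = ofAdd (3 : ZMod 5) := by decide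
      have m1 : ofAdd (1 : ZMod 5) * ofAdd (2 : ZMod 5) = ofAdd (3 : ZMod 5) := by decide
      have m2 : ofAdd (4 : ZMod 5) * ofAdd (2 : ZMod 5) = ofAdd (1 : ZMod 5) := by decide
      have m3 : ofAdd (1 : ZMod 5) * ofAdd (3 : ZMod 5) = ofAdd (4 : ZMod 5) := by decide
      have m4 : ofAdd (4 : ZMod 5) * ofAdd (3 : ZMod 5) = ofAdd (2 : ZMod 5) := by decide
      rw [MonoidAlgebra.one_def]
      simp only [mul_add, add_mul, MonoidAlgebra.single_mul_single, m1, m2, m3, m4,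
        m0, n1, n2, n3, n4, mul_one, one_mul, neg_mul, mul_neg, neg_neg, neg_smul, one_smul,
        Finsupp.single_neg, smul_eq_mul, MonoidAlgebra.single_neg]
      abel
    set x : MonoidAlgebra ℤ (Multiplicative (ZMod 5)) := single (ofAdd (0 : ZMod 5)) (-1)
      + single (ofAdd (1 : ZMod 5)) 1 + single (ofAdd (4 : ZMod 5)) 1 with hx
    set y : MonoidAlgebra ℤ (Multiplicative (ZMod 5)) := single (ofAdd (0 : ZMod 5)) (-1)
      + single (ofAdd (2 : ZMod 5)) 1 + single (ofAdd (3 : ZMod 5)) 1 with hy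
    refine ⟨⟨x, y, key, by rw [mul_comm]; exact key⟩, ?_⟩
    intro hfin
    rw [isOfFinOrder_iff_pow_eq_one] at hfin
    obtain ⟨n, hn, hvn⟩ := hfin
    -- pass to ℂ via ζ = exp(2πi/5)
    set ζ : ℂ := Complex.exp (2 * Real.pi * Complex.I / 5) with hζ
    have hprim : IsPrimitiveRoot ζ 5 := Complex.isPrimitiveRoot_exp 5 (by norm_num)
    have h5 : ζ ^ 5 = 1 := hprim.pow_eq_one
    have hζ1 : ζ ≠ 1 := hprim.ne_one (by norm_num)
    have hsum : ζ ^ 4 + ζ ^ 3 + ζ ^ 2 + ζ + 1 = 0 := by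
      have hfac : (ζ - 1) * (ζ ^ 4 + ζ ^ 3 + ζ ^ 2 + ζ + 1) = 0 := by
        linear_combination h5
      rcases mul_eq_zero.mp hfac with h|h
      · exact absurd (sub_eq_zero.mp h) hζ1
      · exact h
    set φ := (MonoidAlgebra.lift ℤ ℂ (Multiplicative (ZMod 5))) (zmodPowHom 5 ζ h5) with hφ
    have v0 : ((0 : ZMod 5)).val = 0 := by decide
    have v1 : ((1 : ZMod 5)).val = 1 := by decide
    have v2 : ((2 : ZMod 5)).val = 2 := by decide
    have v3 : ((3 : ZMod 5)).val = 3 := by decide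
    have v4 : ((4 : ZMod 5)).val = 4 := by decide
    have hz : φ x = -1 + ζ + ζ ^ 4 := by
      rw [hx]
      simp [hφ, MonoidAlgebra.lift_single, zmodPowHom, v0, v1, v4, zsmul_eq_mul]
    have hzn : (φ x) ^ n = 1 := by
      have : (x ^ n : MonoidAlgebra ℤ (Multiplicative (ZMod 5))) = 1 := by
        have := congrArg (Units.val) hvn
        simpa using this
      rw [← map_pow, this, map_one]
    -- quadratic relation
    have hquad : (φ x) ^ 2 + 3 * (φ x) + 1 = 0 := by
      rw [hz]
      linear_combination hsum + (ζ ^ 3 + 2) * h5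
    have hsq : (Real.sqrt 5 : ℝ) ^ 2 = 5 := Real.sq_sqrt (by norm_num)
    have hs2 : (2 : ℝ) < Real.sqrt 5 := by nlinarith [Real.sqrt_nonneg 5]
    have hs3 : Real.sqrt 5 < 3 := by nlinarith [Real.sqrt_nonneg 5]
    have hfac : (φ x - (((-3 - Real.sqrt 5) / 2 : ℝ) : ℂ)) *
        (φ x - (((-3 + Real.sqrt 5) / 2 : ℝ) : ℂ)) = 0 := by
      have hc : ((Real.sqrt 5 : ℝ) : ℂ) ^ 2 = 5 := by exact_mod_cast congrArg Complex.ofReal hsq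
      push_cast
      linear_combination hquad - (1 / 4 : ℂ) * hc
    have habs : ‖φ x‖ ^ n = 1 := by
      rw [← norm_pow, hzn, norm_one]
    rcases mul_eq_zero.mp hfac with h|h
    · have hzz : φ x = (((-3 - Real.sqrt 5) / 2 : ℝ) : ℂ) := sub_eq_zero.mp h
      rw [hzz, Complex.norm_real, Real.norm_eq_abs] at habs
      have h1 : (1 : ℝ) < |(-3 - Real.sqrt 5) / 2| := by
        rw [abs_of_nonpos (by nlinarith)]
        nlinarith
      have h2 := one_lt_pow₀ h1 (by omega : n ≠ 0)
      linarith
    · have hzz : φ x = (((-3 + Real.sqrt 5) / 2 : ℝ) : ℂ) := sub_eq_zero.mp h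
      rw [hzz, Complex.norm_real, Real.norm_eq_abs] at habs
      have h1 : |(-3 + Real.sqrt 5) / 2| < 1 := by
        rw [abs_of_nonpos (by nlinarith)]
        nlinarith
      have h2 := pow_lt_one₀ (abs_nonneg _) h1 (by omega : n ≠ 0)
      linarith
end
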